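/- For every integer K ≥ 1, all vectors a, b ∈ ℝ^K and every index i ∈ {1,…,K}, the softmax function satisfies |S(a)_i − S(b)_i| ≤ √2 · ‖a − b‖₂. -/

import Mathlib

open scoped BigOperators

/-- The softmax function `S(x)_i = exp(x_i) / ∑_j exp(x_j)` on `ℝ^K`. -/
noncomputable def softmax {K : ℕ} (x : Fin K → ℝ) : Fin K → ℝ :=
  fun i => Real.exp (x i) / ∑ j, Real.exp (x j)

/-- Each coordinate of the softmax is `√2`-Lipschitz with respect to the
Euclidean norm: `|S(a)_i − S(b)_i| ≤ √2 ‖a − b‖₂`. -/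
theorem softmax_coord_lipschitz (K : ℕ) (hK : 1 ≤ K) (a b : Fin K → ℝ) (i : Fin K) :
    |softmax a i - softmax b i| ≤ Real.sqrt 2 * Real.sqrt (∑ j, (a j - b j) ^ 2) := by
  haveI : Nonempty (Fin K) := ⟨⟨0, hK⟩⟩
  set d : Fin K → ℝ := fun j => a j - b j with hd
  set C : ℝ := Real.sqrt 2 * Real.sqrt (∑ j, d j ^ 2) with hC
  have hC0 : 0 ≤ C := mul_nonneg (Real.sqrt_nonneg _) (Real.sqrt_nonneg _)
  set g : ℝ → ℝ := fun t => Real.exp (b i + t * d i) / ∑ j, Real.exp (b j + t * d j) with hg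
  have hDpos : ∀ t : ℝ, 0 < ∑ j, Real.exp (b j + t * d j) := fun t =>
    Finset.sum_pos (fun j _ => Real.exp_pos _) Finset.univ_nonempty
  have hij : ∀ j : Fin K, |d i - d j| ≤ C := by
    intro j
    have h1 : (d i - d j) ^ 2 ≤ 2 * ∑ k, d k ^ 2 := by
      rcases eq_or_ne i j with h | h
      · subst h
        have : (0:ℝ) ≤ ∑ k, d k ^ 2 := Finset.sum_nonneg fun k _ => sq_nonneg _
        simpa using by linarith
      · have h2 : d i ^ 2 + d j ^ 2 ≤ ∑ k, d k ^ 2 := by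
          have h3 := Finset.sum_le_sum_of_subset_of_nonneg
            (Finset.subset_univ ({i, j} : Finset (Fin K)))
            (fun k _ _ => sq_nonneg (d k))
          simpa [Finset.sum_pair h] using h3
        nlinarith [sq_nonneg (d i + d j)]
    rw [← Real.sqrt_sq_eq_abs, hC, ← Real.sqrt_mul (by norm_num : (0:ℝ) ≤ 2)]
    exact Real.sqrt_le_sqrt h1
  have hderiv : ∀ t : ℝ, HasDerivAt g
      ((d i * Real.exp (b i + t * d i) * (∑ j, Real.exp (b j + t * d j))
        - Real.exp (b i + t * d i) * (∑ j, d j * Real.exp (b j + t * d j)))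
        / (∑ j, Real.exp (b j + t * d j)) ^ 2) t := by
    intro t
    have hN : ∀ j : Fin K, HasDerivAt (fun t => Real.exp (b j + t * d j))
        (d j * Real.exp (b j + t * d j)) t := by
      intro j
      have h1 : HasDerivAt (fun t : ℝ => b j + t * d j) (d j) t :=
        (hasDerivAt_mul_const (d j)).const_add (b j)
      simpa [mul_comm] using h1.exp
    exact (hN i).div (HasDerivAt.fun_sum fun j _ => hN j) (hDpos t).ne'
  have hbound : ∀ t : ℝ,
      |(d i * Real.exp (b i + t * d i) * (∑ j, Real.exp (b j + t * d j))
        - Real.exp (b i + t * d i) * (∑ j, d j * Real.exp (b j + t * d j)))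
        / (∑ j, Real.exp (b j + t * d j)) ^ 2| ≤ C := by
    intro t
    set E : Fin K → ℝ := fun j => Real.exp (b j + t * d j) with hE
    have hDpos' : 0 < ∑ j, E j := hDpos t
    have hnum : d i * E i * (∑ j, E j) - E i * (∑ j, d j * E j)
        = E i * ∑ j, (d i - d j) * E j := by
      rw [Finset.mul_sum, Finset.mul_sum, Finset.mul_sum, ← Finset.sum_sub_distrib]
      refine Finset.sum_congr rfl fun j _ => by ring
    rw [hnum, abs_div]
    have hsum : |∑ j, (d i - d j) * E j| ≤ C * ∑ j, E j := by
      calc |∑ j, (d i - d j) * E j| ≤ ∑ j, |(d i - d j) * E j| :=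
            Finset.abs_sum_le_sum_abs _ _
        _ ≤ ∑ j, C * E j := by
            refine Finset.sum_le_sum fun j _ => ?_
            rw [abs_mul, abs_of_pos (Real.exp_pos _)]
            exact mul_le_mul_of_nonneg_right (hij j) (Real.exp_pos _).le
        _ = C * ∑ j, E j := (Finset.mul_sum _ _ _).symm
    have hEle : E i ≤ ∑ j, E j :=
      Finset.single_le_sum (f := E) (fun j _ => (Real.exp_pos _).le) (Finset.mem_univ i)
    have h4 : |E i * ∑ j, (d i - d j) * E j| ≤ E i * (C * ∑ j, E j) := by
      rw [abs_mul, abs_of_pos (Real.exp_pos _)]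
      exact mul_le_mul_of_nonneg_left hsum (Real.exp_pos _).le
    have h5 : |(∑ j, E j) ^ 2| = (∑ j, E j) ^ 2 := abs_of_pos (pow_pos hDpos' 2)
    rw [h5]
    calc |E i * ∑ j, (d i - d j) * E j| / (∑ j, E j) ^ 2
        ≤ E i * (C * ∑ j, E j) / (∑ j, E j) ^ 2 := by gcongr
      _ ≤ C := by
          rw [div_le_iff₀ (pow_pos hDpos' 2)]
          nlinarith [mul_le_mul_of_nonneg_left hEle (mul_nonneg hC0 hDpos'.le)]
  have key : ‖g 1 - g 0‖ ≤ C :=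
    norm_image_sub_le_of_norm_deriv_le_segment_01'
      (fun t _ => (hderiv t).hasDerivWithinAt)
      (fun t _ => by rw [Real.norm_eq_abs]; exact hbound t)
  have hg1 : g 1 = softmax a i := by
    simp only [hg, softmax, hd, one_mul]
    norm_num
  have hg0 : g 0 = softmax b i := by simp [hg, softmax]
  rw [Real.norm_eq_abs, hg1, hg0] at key
  exact key
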